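/- Let p be any prime and n, m, s nonnegative integers with n ≥ m and s ≥ 1. Let r = Σ_{j=0}^{s−1} a_j p^j with 1 ≤ a_0 ≤ p−1 and 0 ≤ a_j ≤ p−1 for j ≥ 1 (so 1 ≤ r ≤ p^s − 1 and p ∤ r). Then C(n·p^s, m·p^s + r) ≡ (m+1) · C(n, m+1) · C(p^s, r) (mod p^(s+1)). -/

import Mathlib

private lemma geom_aux (p : ℕ) (hp : 1 ≤ p) : ∀ s : ℕ, ∑ j ∈ Finset.range s, (p-1) * p ^ j = p ^ s - 1 := by
  intro s
  induction s with
  | zero => simp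
  | succ s ih =>
    rw [Finset.sum_range_succ, ih]
    have h1 : 1 ≤ p ^ s := Nat.one_le_pow _ _ hp
    have key : p ^ s + (p-1) * p^s = p ^ (s+1) := by
      have e : 1 + (p - 1) = p := by omega
      calc p^s + (p-1)*p^s = (1 + (p-1)) * p^s := by ring
      _ = p * p^s := by rw [e]
      _ = p^(s+1) := (pow_succ' p s).symm
    omega

private lemma core_aux (p s n m r : ℕ) (hp : p.Prime) (hs : 1 ≤ s)
    (hr1 : 1 ≤ r) (hr2 : r < p ^ s) (hpr : ¬ p ∣ r) :
    (((n * p ^ s).choose (m * p ^ s + r) : ℕ) : ZMod (p ^ (s+1))) =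
      ((n * Nat.choose (n-1) m * Nat.choose (p^s) r : ℕ) : ZMod (p ^ (s+1))) := by
  classical
  set R := ZMod (p ^ (s+1)) with hR
  have hq : 0 < p ^ s := pow_pos hp.pos s
  have hpq : p ∣ p ^ s := dvd_pow_self p (by omega)
  -- nat divisibility facts
  have hF1 : ∀ i, 0 < i → i < p^s → p ∣ (p^s).choose i := by
    intro i h1 h2
    exact hp.dvd_choose_pow (by omega) (by omega)
  have hF2 : ∀ i, ¬ p ∣ i → p^s ∣ (p^s).choose i := by
    intro i hi
    rcases Nat.lt_or_ge (p^s) i with h | h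
    · rw [Nat.choose_eq_zero_of_lt h]; exact dvd_zero _
    · have hi1 : 1 ≤ i := by
        rcases Nat.eq_zero_or_pos i with h0 | h0
        · exact absurd (h0 ▸ dvd_zero p) hi
        · exact h0
      have key := Nat.add_one_mul_choose_eq (p^s - 1) (i - 1)
      have e1 : (p^s - 1).succ = p^s := Nat.succ_pred_eq_of_pos hq
      have e2 : (i-1).succ = i := Nat.succ_pred_eq_of_pos hi1
      rw [Nat.succ_eq_add_one] at e1 e2
      rw [e1, e2] at key
      have hdvd : p^s ∣ (p^s).choose i * i := ⟨_, key.symm⟩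
      have hcop : Nat.Coprime (p^s) i := ((Nat.Prime.coprime_iff_not_dvd hp).mpr hi).pow_left s
      exact Nat.Coprime.dvd_of_dvd_mul_right hcop hdvd
  set A : Polynomial R := Polynomial.X ^ (p^s) + 1 with hAdef
  set E : Polynomial R := (Polynomial.X + 1) ^ (p^s) - A with hEdef
  have hAE : E + A = (Polynomial.X + 1) ^ (p^s) := by rw [hEdef]; ring
  have hApow : ∀ t j : ℕ, (A ^ t).coeff j = if p^s ∣ j then ((t.choose (j / p^s) : ℕ) : R) else 0 := by
    intro t j
    have h1 : A ^ t = Polynomial.expand R (p^s) ((Polynomial.X + 1) ^ t) := by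
      rw [map_pow, map_add, Polynomial.expand_X, map_one]
    rw [h1, Polynomial.coeff_expand hq]
    split <;> simp [Polynomial.coeff_X_add_one_pow]
  have hAco : ∀ t j, ¬ p^s ∣ j → (A ^ t).coeff j = 0 := by
    intro t j h; rw [hApow]; simp [h]
  have hEmid : ∀ j, 0 < j → j < p^s → E.coeff j = (((p^s).choose j : ℕ) : R) := by
    intro j h1 h2
    rw [hEdef, Polynomial.coeff_sub, Polynomial.coeff_X_add_one_pow]
    have hnd : ¬ p ^ s ∣ j := fun h => absurd (Nat.le_of_dvd h1 h) (not_le.mpr h2)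
    have h0 := hAco 1 j hnd
    rw [pow_one] at h0
    rw [h0, sub_zero]
  have hEco0 : E.coeff 0 = 0 := by
    rw [hEdef, Polynomial.coeff_sub, Polynomial.coeff_X_add_one_pow, hAdef]
    simp [Polynomial.coeff_one, Polynomial.coeff_X_pow, hq.ne, hq.ne']
  have hEcoQ : E.coeff (p^s) = 0 := by
    rw [hEdef, Polynomial.coeff_sub, Polynomial.coeff_X_add_one_pow, hAdef]
    simp [Polynomial.coeff_X_pow, Polynomial.coeff_one, hq.ne, hq.ne', hp.ne_zero]
  have hEbig : ∀ j, p^s < j → E.coeff j = 0 := by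
    intro j hj
    rw [hEdef, Polynomial.coeff_sub, Polynomial.coeff_X_add_one_pow, Nat.choose_eq_zero_of_lt hj, hAdef]
    simp [Polynomial.coeff_X_pow, Polynomial.coeff_one, hj.ne, hj.ne', (by omega : ¬ (j = 0))]
    exact fun h0 => absurd h0 (by omega)
  have hE1 : ∀ i, ((p:ℕ) : R) ∣ E.coeff i := by
    intro i
    rcases Nat.eq_zero_or_pos i with h | h
    · rw [h, hEco0]; exact dvd_zero _
    rcases lt_trichotomy i (p^s) with h2 | h2 | h2
    · rw [hEmid i h h2]; exact Nat.cast_dvd_cast (hF1 i h h2)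
    · rw [h2, hEcoQ]; exact dvd_zero _
    · rw [hEbig i h2]; exact dvd_zero _
  have hE2 : ∀ i, ¬ p ∣ i → ((p^s : ℕ) : R) ∣ E.coeff i := by
    intro i hi
    have h0 : 0 < i := Nat.pos_of_ne_zero (fun h => hi (h ▸ dvd_zero p))
    rcases lt_trichotomy i (p^s) with h2 | h2 | h2
    · rw [hEmid i h0 h2]; exact Nat.cast_dvd_cast (hF2 i hi)
    · exact absurd (h2 ▸ hpq) hi
    · rw [hEbig i h2]; exact dvd_zero _
  have hmul : ∀ f g : Polynomial R, (∀ i, ((p:ℕ):R) ∣ f.coeff i) → (∀ i, ¬ p ∣ i → ((p^s:ℕ):R) ∣ f.coeff i) →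
      (∀ i, ((p:ℕ):R) ∣ g.coeff i) → (∀ i, ¬ p ∣ i → ((p^s:ℕ):R) ∣ g.coeff i) →
      ∀ j, ¬ p ∣ j → (f * g).coeff j = 0 := by
    intro f g hf1 hf2 hg1 hg2 j hj
    rw [Polynomial.coeff_mul]
    apply Finset.sum_eq_zero
    intro x hx
    rw [Finset.HasAntidiagonal.mem_antidiagonal] at hx
    have hcast : ((p^s : ℕ) : R) * ((p:ℕ) : R) = 0 := by
      rw [← Nat.cast_mul, ← pow_succ]
      exact ZMod.natCast_self _
    have hsplit : ¬ p ∣ x.1 ∨ ¬ p ∣ x.2 := by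
      by_contra h
      push_neg at h
      exact hj (hx ▸ Nat.dvd_add h.1 h.2)
    rcases hsplit with h | h
    · obtain ⟨c, hc⟩ := hf2 x.1 h
      obtain ⟨d, hd⟩ := hg1 x.2
      rw [hc, hd, show ((p^s:ℕ):R) * c * (((p:ℕ):R) * d) = ((p^s:ℕ):R) * ((p:ℕ):R) * (c*d) by ring,
        hcast, zero_mul]
    · obtain ⟨c, hc⟩ := hf1 x.1
      obtain ⟨d, hd⟩ := hg2 x.2 h
      rw [hc, hd, show ((p:ℕ):R) * c * (((p^s:ℕ):R) * d) = ((p^s:ℕ):R) * ((p:ℕ):R) * (c*d) by ring,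
        hcast, zero_mul]
  have hmulP : ∀ f g : Polynomial R, (∀ i, ((p:ℕ):R) ∣ f.coeff i) →
      ∀ i, ((p:ℕ):R) ∣ (f*g).coeff i := by
    intro f g hf i
    rw [Polynomial.coeff_mul]
    exact Finset.dvd_sum (fun x _ => Dvd.dvd.mul_right (hf x.1) _)
  have hQ : ∀ k, 1 ≤ k → (∀ i, ((p:ℕ):R) ∣ (E^k).coeff i) ∧ (∀ i, ¬ p ∣ i → ((p^s:ℕ):R) ∣ (E^k).coeff i) := by
    intro k hk
    induction k with
    | zero => omega
    | succ k ih =>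
      rcases Nat.eq_zero_or_pos k with h | h
      · subst h
        refine ⟨fun i => ?_, fun i hi => ?_⟩
        · rw [pow_one]; exact hE1 i
        · rw [pow_one]; exact hE2 i hi
      obtain ⟨ih1, ih2⟩ := ih h
      constructor
      · intro i; simp only [pow_succ]; exact hmulP _ _ ih1 i
      · intro i hi
        simp only [pow_succ]
        rw [hmul _ _ ih1 ih2 hE1 hE2 i hi]
        exact dvd_zero _
  have hEk0 : ∀ k, 2 ≤ k → ∀ i, ¬ p ∣ i → (E^k).coeff i = 0 := by
    intro k hk i hi
    obtain ⟨k', rfl⟩ : ∃ k', k = k' + 1 := ⟨k-1, by omega⟩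
    simp only [pow_succ]
    exact hmul _ _ (hQ k' (by omega)).1 (hQ k' (by omega)).2 hE1 hE2 i hi
  have hpK : ¬ p ∣ (m * p^s + r) := by
    intro h
    exact hpr ((Nat.dvd_add_right (Dvd.dvd.mul_left hpq m)).mp h)
  have hcmul : ∀ (f : Polynomial R) (c : ℕ) (j : ℕ), (f * (c : Polynomial R)).coeff j = f.coeff j * (c : R) := by
    intro f c j
    rw [← Polynomial.C_eq_natCast, Polynomial.coeff_mul_C]
  -- main computation
  rw [← Polynomial.coeff_X_add_one_pow R (n * p^s) (m * p^s + r), pow_mul', ← hAE, add_pow,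
    Polynomial.finset_sum_coeff]
  simp only [hcmul]
  rw [Finset.sum_eq_single 1 ?h1 ?h2]
  case h1 =>
    intro b _ hb1
    rcases Nat.eq_zero_or_pos b with rfl | hb0
    · rw [pow_zero, one_mul, hAco (n-0) _ (fun h => hpK (hpq.trans h)), zero_mul]
    · have hb2 : 2 ≤ b := by omega
      have : (E ^ b * A ^ (n - b)).coeff (m * p^s + r) = 0 := by
        rw [Polynomial.coeff_mul]
        apply Finset.sum_eq_zero
        intro x hx
        rw [Finset.HasAntidiagonal.mem_antidiagonal] at hx
        by_cases h2 : p ^ s ∣ x.2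
        · have hx1 : ¬ p ∣ x.1 := by
            intro h1
            exact hpK (hx ▸ Nat.dvd_add h1 (hpq.trans h2))
          rw [hEk0 b hb2 x.1 hx1, zero_mul]
        · rw [hAco _ _ h2, mul_zero]
      rw [this, zero_mul]
  case h2 =>
    intro h1
    have hn : n = 0 := by
      by_contra hn
      exact h1 (Finset.mem_range.mpr (by omega))
    rw [hn]
    simp [Nat.choose]
  -- evaluate the k = 1 term
  rw [pow_one, Nat.choose_one_right]
  have hcoeff1 : (E * A ^ (n-1)).coeff (m * p^s + r) =
      (((p^s).choose r : ℕ):R) * ((Nat.choose (n-1) m : ℕ):R) := by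
    rw [Polynomial.coeff_mul]
    rw [Finset.sum_eq_single (r, m * p^s) ?z1 ?z2]
    · rw [hEmid r hr1 hr2, hApow]
      have hd : p ^ s ∣ m * p ^ s := Dvd.intro_left m rfl
      rw [if_pos hd, Nat.mul_div_cancel m hq]
    case z1 =>
      intro x hx hne
      rw [Finset.HasAntidiagonal.mem_antidiagonal] at hx
      by_cases h2 : p ^ s ∣ x.2
      · rcases lt_trichotomy x.1 (p^s) with h1 | h1 | h1
        · exfalso
          obtain ⟨c, hc⟩ := h2
          have e1 : (x.1 + x.2) % (p ^ s) = x.1 % (p ^ s) := by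
            rw [hc, Nat.mul_comm, Nat.add_mul_mod_self_right]
          have e2 : (m * p^s + r) % (p ^ s) = r % (p ^ s) := by
            rw [Nat.add_comm, Nat.add_mul_mod_self_right]
          rw [hx, e2, Nat.mod_eq_of_lt h1, Nat.mod_eq_of_lt hr2] at e1
          apply hne
          have : x.2 = m * p ^ s := by omega
          rw [Prod.ext_iff]
          exact ⟨e1.symm, this⟩
        · rw [h1, hEcoQ, zero_mul]
        · rw [hEbig x.1 h1, zero_mul]
      · rw [hAco _ _ h2, mul_zero]
    case z2 =>
      intro h
      exact absurd (Finset.HasAntidiagonal.mem_antidiagonal.mpr (by omega)) h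
  rw [hcoeff1]
  push_cast
  ring

theorem stmt1 (p n m s : ℕ) (hp : p.Prime) (hmn : m ≤ n) (hs : 1 ≤ s)
    (a : ℕ → ℕ) (ha0 : 1 ≤ a 0) (ha0' : a 0 ≤ p - 1)
    (ha : ∀ j, 1 ≤ j → j ≤ s - 1 → a j ≤ p - 1)
    (r : ℕ) (hr : r = ∑ j ∈ Finset.range s, a j * p ^ j) :
    (((n * p ^ s).choose (m * p ^ s + r) : ℤ)) ≡
      (m + 1) * (n.choose (m + 1)) * ((p ^ s).choose r)
      [ZMOD ((p : ℤ) ^ (s + 1))] := by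
  have hp1 : 1 ≤ p := hp.pos
  have hp2 : 2 ≤ p := hp.two_le
  have hq : 0 < p ^ s := pow_pos hp.pos s
  -- bounds on r
  have hr1 : 1 ≤ r := by
    rw [hr]
    have h0 : a 0 * p ^ 0 ≤ ∑ j ∈ Finset.range s, a j * p ^ j :=
      Finset.single_le_sum (f := fun j => a j * p ^ j) (fun i _ => Nat.zero_le _) (Finset.mem_range.mpr hs)
    simp only [pow_zero, mul_one] at h0
    omega
  have hr2 : r < p ^ s := by
    have hb : ∀ j ∈ Finset.range s, a j * p ^ j ≤ (p-1) * p ^ j := by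
      intro j hj
      rw [Finset.mem_range] at hj
      apply Nat.mul_le_mul_right
      rcases Nat.eq_zero_or_pos j with h | h
      · subst h; exact ha0'
      · exact ha j h (by omega)
    have hle := Finset.sum_le_sum hb
    rw [geom_aux p hp1 s] at hle
    rw [hr]
    omega
  have hpr : ¬ p ∣ r := by
    have e : r = a 0 + p * (∑ j ∈ Finset.range (s-1), a (j+1) * p ^ j) := by
      obtain ⟨s', rfl⟩ : ∃ s', s = s' + 1 := ⟨s - 1, by omega⟩
      rw [hr, Finset.sum_range_succ', pow_zero, mul_one, Nat.add_comm]
      congr 1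
      · rw [Finset.mul_sum]
        apply Finset.sum_congr rfl
        intro j _
        ring
    intro hdvd
    have hda : p ∣ a 0 := by
      have h2 : p ∣ p * (∑ j ∈ Finset.range (s-1), a (j+1) * p ^ j) := dvd_mul_right _ _
      have h3 := Nat.dvd_sub hdvd h2
      rw [e, Nat.add_sub_cancel] at h3
      exact h3
    have hge := Nat.le_of_dvd (show 0 < a 0 by omega) hda
    omega
  -- reduce to ZMod equality
  have hmod : ((p:ℤ)^(s+1)) = ((p^(s+1) : ℕ) : ℤ) := by push_cast; ring
  rw [hmod, ← ZMod.intCast_eq_intCast_iff]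
  have hcore := core_aux p s n m r hp hs hr1 hr2 hpr
  have hid : n * Nat.choose (n-1) m = Nat.choose n (m+1) * (m+1) := by
    cases n with
    | zero =>
      rw [Nat.choose_eq_zero_of_lt (show (0:ℕ) < m + 1 by omega)]
      simp
    | succ n' =>
      have := Nat.add_one_mul_choose_eq n' m
      simpa using this
  push_cast
  push_cast at hcore
  rw [hcore]
  rw [show ((n:ZMod (p^(s+1))) * ((n-1).choose m : ℕ) * (((p^s).choose r : ℕ)))
      = (((n * Nat.choose (n-1) m : ℕ) : ZMod (p^(s+1)))) * (((p^s).choose r : ℕ)) by push_cast; ring]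
  rw [hid]
  push_cast
  ring
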